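/- For the complete graph on n ≥ 2 nodes with unit weights, the even-indexed coefficients in the Taylor expansion of the inverse Kuramoto map vanish: if Σ_j A_j(η) is a formal power series with A_j homogeneous of degree j satisfying η = 𝒫 Σ_{k≥0} ((−1)^k/(2k+1)!)(Σ_i A_i(η))^{∘(2k+1)}, then matching all even-degree homogeneous terms gives A_{2j}(η) = 0 for every j ≥ 1. -/

import Mathlib

open Matrix

/-- Edges of the complete graph on `n` nodes. -/
def CompleteEdge (n : ℕ) := {p : Fin n × Fin n // p.1 < p.2}

instance (n : ℕ) : Fintype (CompleteEdge n) := by unfold CompleteEdge; infer_instance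
instance (n : ℕ) : DecidableEq (CompleteEdge n) := by unfold CompleteEdge; infer_instance

/-- Oriented incidence matrix of the complete graph on `n` nodes. -/
def completeIncidence (n : ℕ) : Matrix (Fin n) (CompleteEdge n) ℝ :=
  Matrix.of fun i e => if i = e.1.1 then 1 else if i = e.1.2 then -1 else 0

/-- Compositions of `d` into `2*k+1` positive parts (ordered tuples). -/
def posCompositions (k d : ℕ) : Finset (Fin (2 * k + 1) → ℕ) :=
  (Fintype.piFinset fun _ => Finset.range (d + 1)).filter
    (fun α => (∀ i, 1 ≤ α i) ∧ ∑ i, α i = d)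

lemma posComp_zero (d : ℕ) (hd : 1 ≤ d) :
    posCompositions 0 d = {fun _ => d} := by
  ext α
  simp only [posCompositions, Finset.mem_filter, Fintype.mem_piFinset, Finset.mem_range,
    Finset.mem_singleton]
  constructor
  · rintro ⟨-, -, hsum⟩
    funext i
    have huniq : ∀ i' : Fin (2 * 0 + 1), i' = i := fun i' => Fin.ext (by omega)
    rw [← hsum, Finset.sum_eq_single_of_mem i (Finset.mem_univ i)
      (fun b _ hb => absurd (huniq b) hb)]
  · rintro rfl
    refine ⟨fun i => Nat.lt_succ_self d, fun i => hd, ?_⟩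
    rw [Finset.sum_const, Finset.card_univ, Fintype.card_fin]
    simp

theorem even_terms_vanish
    (n : ℕ) (hn : 2 ≤ n)
    -- L† : Moore–Penrose pseudoinverse of the Laplacian L = BBᵀ (unit weights)
    (Ldag : Matrix (Fin n) (Fin n) ℝ)
    (hL1 : (completeIncidence n * (completeIncidence n).transpose) * Ldag *
        (completeIncidence n * (completeIncidence n).transpose)
      = completeIncidence n * (completeIncidence n).transpose)
    (hL2 : Ldag * (completeIncidence n * (completeIncidence n).transpose) * Ldag = Ldag)
    (hL3 : ((completeIncidence n * (completeIncidence n).transpose) * Ldag).transpose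
      = (completeIncidence n * (completeIncidence n).transpose) * Ldag)
    (hL4 : (Ldag * (completeIncidence n * (completeIncidence n).transpose)).transpose
      = Ldag * (completeIncidence n * (completeIncidence n).transpose))
    -- 𝒫 = Bᵀ L† B (unit weights)
    (P : Matrix (CompleteEdge n) (CompleteEdge n) ℝ)
    (hP : P = (completeIncidence n).transpose * Ldag * completeIncidence n)
    (η : CompleteEdge n → ℝ)
    -- A_j : the homogeneous components (of degree j) of the formal power series
    (A : ℕ → (CompleteEdge n → ℝ))
    (hA0 : A 0 = 0)
    -- each A_j takes values in Img(Bᵀ), being a component of Bᵀ f_K⁻¹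
    (hImg : ∀ j, ∃ y : Fin n → ℝ, A j = (completeIncidence n).transpose.mulVec y)
    -- matching homogeneous terms of degree d on both sides of
    -- η = 𝒫 Σ_{k≥0} ((−1)^k/(2k+1)!) (Σ_i A_i(η))^{∘(2k+1)}
    (hmatch : ∀ d : ℕ,
      (if d = 1 then η else 0) =
        P.mulVec (∑ k ∈ Finset.range d, ∑ α ∈ posCompositions k d,
          ((-1 : ℝ) ^ k / (Nat.factorial (2 * k + 1))) •
            (fun e => ∏ i, A (α i) e))) :
    ∀ j : ℕ, 1 ≤ j → A (2 * j) = 0 := by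
  set B := completeIncidence n with hB
  intro j
  induction j using Nat.strong_induction_on with
  | _ j IH =>
  intro hj
  have hmatch' := hmatch (2 * j)
  rw [if_neg (by omega)] at hmatch'
  have hsum : (∑ k ∈ Finset.range (2 * j), ∑ α ∈ posCompositions k (2 * j),
      ((-1 : ℝ) ^ k / (Nat.factorial (2 * k + 1))) • (fun e => ∏ i, A (α i) e))
      = A (2 * j) := by
    rw [Finset.sum_eq_single 0]
    · rw [posComp_zero (2 * j) (by omega), Finset.sum_singleton]
      funext e
      simp [Fin.prod_univ_one, Nat.factorial]
    · intro k hk hk0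
      apply Finset.sum_eq_zero
      intro α hα
      simp only [posCompositions, Finset.mem_filter, Fintype.mem_piFinset] at hα
      obtain ⟨-, hpos, hsum⟩ := hα
      have hk1 : 1 ≤ k := Nat.one_le_iff_ne_zero.mpr hk0
      -- find an even part
      have hexists : ∃ i, α i % 2 = 0 := by
        by_contra h
        push_neg at h
        have hone : ∀ i, α i % 2 = 1 := fun i => by have := h i; omega
        have hmod : (∑ i, α i) % 2 = 1 := by
          rw [Finset.sum_nat_mod]
          simp [hone, Finset.sum_const, Finset.card_univ]
        omega
      obtain ⟨i, hi⟩ := hexists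
      -- the part is small
      have hle : ∑ i' ∈ (Finset.univ.erase i), α i' ≥ 2 * k := by
        calc ∑ i' ∈ (Finset.univ.erase i), α i'
            ≥ ∑ _i' ∈ (Finset.univ.erase i), 1 :=
              Finset.sum_le_sum (fun i' _ => hpos i')
          _ = 2 * k := by
              rw [Finset.sum_const, Finset.card_erase_of_mem (Finset.mem_univ i),
                Finset.card_univ]
              simp
      have htot : α i + ∑ i' ∈ (Finset.univ.erase i), α i' = 2 * j := by
        rw [Finset.add_sum_erase _ _ (Finset.mem_univ i)]; exact hsum
      have hlt : α i < 2 * j := by omega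
      have hge : 1 ≤ α i := hpos i
      obtain ⟨m, hm⟩ : ∃ m, α i = 2 * m := ⟨α i / 2, by omega⟩
      have hAz : A (α i) = 0 := by
        rw [hm]; exact IH m (by omega) (by omega)
      have : (fun e => ∏ i', A (α i') e) = 0 := by
        funext e
        exact Finset.prod_eq_zero (Finset.mem_univ i) (by rw [hAz]; rfl)
      rw [this, smul_zero]
    · intro h
      exact absurd (Finset.mem_range.mpr (by omega)) h
  rw [hsum] at hmatch'
  obtain ⟨y, hy⟩ := hImg (2 * j)
  rw [hy, hP, Matrix.mulVec_mulVec] at hmatch'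
  -- hmatch' : 0 = (Bᵀ * Ldag * B * Bᵀ).mulVec y
  have h2 : ((B * Bᵀ) * Ldag * (B * Bᵀ)).mulVec y = 0 := by
    have := congrArg (fun v => B.mulVec v) hmatch'
    simp only [Matrix.mulVec_zero, Matrix.mulVec_mulVec] at this
    rw [show B * Bᵀ * Ldag * (B * Bᵀ) = B * (Bᵀ * Ldag * B * Bᵀ) by
      simp only [Matrix.mul_assoc]]
    exact this.symm
  rw [hL1] at h2
  have h3 : Bᵀ.mulVec y ⬝ᵥ Bᵀ.mulVec y = 0 := by
    have hkey : Bᵀ.mulVec y ⬝ᵥ Bᵀ.mulVec y = y ⬝ᵥ (B * Bᵀ).mulVec y := by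
      rw [← Matrix.mulVec_mulVec, dotProduct_mulVec, Matrix.vecMul_transpose]
      exact dotProduct_comm _ _
    rw [hkey, h2, dotProduct_zero]
  have h4 : Bᵀ.mulVec y = 0 := by
    funext e
    have hnn : ∀ e' : CompleteEdge n, 0 ≤ Bᵀ.mulVec y e' * Bᵀ.mulVec y e' :=
      fun e' => mul_self_nonneg _
    have := (Finset.sum_eq_zero_iff_of_nonneg (fun e' _ => hnn e')).mp h3 e (Finset.mem_univ e)
    have := mul_self_eq_zero.mp this
    exact this
  rw [hy, h4]
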